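/- For every connected layer multicomplex M of rank d on n elements there exist positive integers n_1,...,n_k with n_1 + ... + n_k ≤ 2n − 1 such that the length of M is at most H_clm(n_1, d−1) + ... + H_clm(n_k, d−1) + k − 1. -/

import Mathlib

/-- `IsCLM n d a b L` : the layers `L a, …, L b` form a connected layer multicomplex
of rank `d` on `n` elements. The facets (size-`d` multisets of `[n]`) are partitioned
into the nonempty layers `L a, …, L b`, and for every multiset `S` the set of layers
whose star contains `S` is an interval. -/
def IsCLM (n d : ℕ) (a b : ℤ) (L : ℤ → Set (Multiset (Fin n))) : Prop :=
  a ≤ b ∧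
  (∀ i X, X ∈ L i → Multiset.card X = d) ∧
  (∀ i, (L i).Nonempty ↔ a ≤ i ∧ i ≤ b) ∧
  (∀ i j X, X ∈ L i → X ∈ L j → i = j) ∧
  (∀ (S : Multiset (Fin n)) (i j k : ℤ), i ≤ j → j ≤ k →
    (∃ X ∈ L i, S ≤ X) → (∃ X ∈ L k, S ≤ X) → ∃ X ∈ L j, S ≤ X)

/-- `Hclm n d` : the maximum length of connected layer multicomplexes of rank `d`
on `n` elements. -/
noncomputable def Hclm (n d : ℕ) : ℕ :=
  sSup {l | ∃ (a b : ℤ) (L : ℤ → Set (Multiset (Fin n))),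
    IsCLM n d a b L ∧ (b - a).toNat = l}

/-- Pull back a sub-multiset along a map. -/
lemma exists_le_map_aux {α β : Type*} [DecidableEq α] [DecidableEq β] (f : α → β) (s : Multiset β) :
    ∀ t : Multiset α, s ≤ t.map f → ∃ s', s' ≤ t ∧ s'.map f = s := by
  induction s using Multiset.induction with
  | empty => exact fun t _ => ⟨0, Multiset.zero_le t, rfl⟩
  | cons b s ih =>
    intro t hle
    have hb : b ∈ t.map f := Multiset.mem_of_le hle (Multiset.mem_cons_self _ _)
    obtain ⟨a, ha, rfl⟩ := Multiset.mem_map.mp hb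
    have ht : t = a ::ₘ t.erase a := (Multiset.cons_erase ha).symm
    have h1 : s ≤ (t.erase a).map f := by
      have h2 := Multiset.erase_le_erase (f a) hle
      rw [Multiset.erase_cons_head] at h2
      have h3 : (t.map f).erase (f a) = (t.erase a).map f := by
        conv_lhs => rw [ht]
        rw [Multiset.map_cons, Multiset.erase_cons_head]
      rwa [h3] at h2
    obtain ⟨s', hs', hmap⟩ := ih (t.erase a) h1
    refine ⟨a ::ₘ s', ?_, by rw [Multiset.map_cons, hmap]⟩
    rw [ht]
    exact Multiset.cons_le_cons a hs'

/-- Any CLM of rank `r` on `m` elements has at most `card (Sym (Fin m) r)` layers. -/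
lemma length_add_one_le {m r : ℕ} {a b : ℤ} {L : ℤ → Set (Multiset (Fin m))}
    (h : IsCLM m r a b L) : (b - a).toNat + 1 ≤ Fintype.card (Sym (Fin m) r) := by
  classical
  obtain ⟨hab, hcard, hne, hdisj, -⟩ := h
  have hne' : ∀ i ∈ Finset.Icc a b, (L i).Nonempty := fun i hi =>
    (hne i).2 (Finset.mem_Icc.mp hi)
  choose g hg using hne'
  have hamem : a ∈ Finset.Icc a b := Finset.mem_Icc.mpr ⟨le_refl a, hab⟩
  set F : ℤ → Sym (Fin m) r := fun i =>
    if hi : i ∈ Finset.Icc a b then ⟨g i hi, hcard _ _ (hg i hi)⟩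
    else ⟨g a hamem, hcard _ _ (hg a hamem)⟩ with hF
  have hinj : Set.InjOn F (Finset.Icc a b) := by
    intro i hi j hj hij
    simp only [Finset.coe_Icc, Set.mem_Icc] at hi hj
    have hi' : i ∈ Finset.Icc a b := Finset.mem_Icc.mpr hi
    have hj' : j ∈ Finset.Icc a b := Finset.mem_Icc.mpr hj
    rw [hF] at hij
    simp only [dif_pos hi', dif_pos hj'] at hij
    have : g i hi' = g j hj' := by
      have e1 : F i = ⟨g i hi', hcard _ _ (hg i hi')⟩ := dif_pos hi'
      have e2 : F j = ⟨g j hj', hcard _ _ (hg j hj')⟩ := dif_pos hj'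
      have h := congrArg Subtype.val (e1.symm.trans (hij.trans e2))
      exact h
    exact hdisj i j _ (hg i hi') (this ▸ hg j hj')
  have hle : (Finset.Icc a b).card ≤ (Finset.univ : Finset (Sym (Fin m) r)).card :=
    Finset.card_le_card_of_injOn F (fun x _ => Finset.mem_univ (F x)) hinj
  rw [Int.card_Icc, Finset.card_univ] at hle
  omega

/-- The length of any CLM is at most `Hclm`. -/
lemma length_le_Hclm {m r : ℕ} {a b : ℤ} {L : ℤ → Set (Multiset (Fin m))}
    (h : IsCLM m r a b L) : (b - a).toNat ≤ Hclm m r := by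
  apply le_csSup
  · refine ⟨Fintype.card (Sym (Fin m) r), ?_⟩
    rintro l ⟨a', b', L', h', rfl⟩
    have := length_add_one_le h'
    omega
  · exact ⟨a, b, L, h, rfl⟩

/-- Restriction of a CLM to a subinterval of layers. -/
lemma isCLM_restrict {n d : ℕ} {a b : ℤ} {L : ℤ → Set (Multiset (Fin n))}
    (h : IsCLM n d a b L) {a' b' : ℤ} (h1 : a ≤ a') (h2 : a' ≤ b') (h3 : b' ≤ b) :
    IsCLM n d a' b' (fun i => if a' ≤ i ∧ i ≤ b' then L i else ∅) := by
  obtain ⟨hab, hcard, hne, hdisj, hconn⟩ := h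
  refine ⟨h2, ?_, ?_, ?_, ?_⟩
  · intro i X hX
    by_cases hi : a' ≤ i ∧ i ≤ b'
    · exact hcard i X (by simpa [hi] using hX)
    · simp [hi] at hX
  · intro i
    by_cases hi : a' ≤ i ∧ i ≤ b'
    · simp only [if_pos hi]
      rw [hne i]
      constructor
      · intro _; exact hi
      · intro _; exact ⟨le_trans h1 hi.1, le_trans hi.2 h3⟩
    · simp [hi]
  · intro i j X hXi hXj
    by_cases hi : a' ≤ i ∧ i ≤ b'
    · by_cases hj : a' ≤ j ∧ j ≤ b'
      · exact hdisj i j X (by simpa [hi] using hXi) (by simpa [hj] using hXj)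
      · simp [hj] at hXj
    · simp [hi] at hXi
  · rintro S i j k hij hjk ⟨X, hXi, hSX⟩ ⟨Y, hYk, hSY⟩
    by_cases hi : a' ≤ i ∧ i ≤ b'
    · by_cases hk : a' ≤ k ∧ k ≤ b'
      · have hj : a' ≤ j ∧ j ≤ b' := ⟨le_trans hi.1 hij, le_trans hjk hk.2⟩
        obtain ⟨Z, hZ, hSZ⟩ := hconn S i j k hij hjk ⟨X, by simpa [hi] using hXi, hSX⟩
          ⟨Y, by simpa [hk] using hYk, hSY⟩
        exact ⟨Z, by simpa [hj] using hZ, hSZ⟩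
      · simp [hk] at hYk
    · simp [hi] at hXi

/-- The key lemma for a single piece: if some vertex `v` appears both in the first and the
last layer, then the length is at most `Hclm` of the size of the support of the link of `v`. -/
lemma piece {n d : ℕ} (hd : 1 ≤ d) {a b : ℤ} {L : ℤ → Set (Multiset (Fin n))}
    (hM : IsCLM n d a b L) {v : Fin n}
    (hva : ∃ X ∈ L a, v ∈ X) (hvb : ∃ X ∈ L b, v ∈ X) :
    (b - a).toNat ≤
      Hclm (({v} ∪ {u | ∃ i, ∃ X ∈ L i, v ∈ X ∧ u ∈ X.erase v} : Set (Fin n)).ncard) (d - 1) := by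
  classical
  obtain ⟨hab, hcard, hne, hdisj, hconn⟩ := hM
  set T : Set (Fin n) := {v} ∪ {u | ∃ i, ∃ X ∈ L i, v ∈ X ∧ u ∈ X.erase v} with hT
  have hTfin : T.Finite := Set.toFinite T
  have hvT : v ∈ T := Or.inl rfl
  set s : Finset (Fin n) := hTfin.toFinset with hs
  have hncard : T.ncard = s.card := Set.ncard_eq_toFinset_card T hTfin
  rw [hncard]
  set m := s.card with hm
  have hvs : v ∈ s := by rw [hs, Set.Finite.mem_toFinset]; exact hvT
  set e := s.equivFin with he
  set f : Fin n → Fin m := fun u => if h : u ∈ s then e ⟨u, h⟩ else e ⟨v, hvs⟩ with hf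
  set g : Fin m → Fin n := fun x => (e.symm x : Fin n) with hg
  have hgf : ∀ u ∈ T, g (f u) = u := by
    intro u hu
    have hus : u ∈ s := by rw [hs, Set.Finite.mem_toFinset]; exact hu
    simp [hf, hg, dif_pos hus]
  -- elements of the link are in T
  have hmemT : ∀ (i : ℤ) (S : Multiset (Fin n)), (v ::ₘ S) ∈ L i → ∀ u ∈ S, u ∈ T := by
    intro i S hS u hu
    exact Or.inr ⟨i, v ::ₘ S, hS, Multiset.mem_cons_self v S, by
      rwa [Multiset.erase_cons_head]⟩
  have hretract : ∀ (i : ℤ) (S : Multiset (Fin n)), (v ::ₘ S) ∈ L i →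
      (S.map f).map g = S := by
    intro i S hS
    rw [Multiset.map_map]
    rw [show S.map (g ∘ f) = S.map id from
      Multiset.map_congr rfl (fun u hu => hgf u (hmemT i S hS u hu))]
    exact Multiset.map_id S
  set L2 : ℤ → Set (Multiset (Fin m)) :=
    fun i => Multiset.map f '' {S | (v ::ₘ S) ∈ L i} with hL2
  have hCLM2 : IsCLM m (d - 1) a b L2 := by
    refine ⟨hab, ?_, ?_, ?_, ?_⟩
    · rintro i X ⟨S, hS, rfl⟩
      have := hcard i _ hS
      rw [Multiset.card_cons] at this
      rw [Multiset.card_map]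
      omega
    · intro i
      constructor
      · rintro ⟨X, S, hS, rfl⟩
        exact (hne i).1 ⟨v ::ₘ S, hS⟩
      · rintro ⟨hia, hib⟩
        obtain ⟨X, hX, hvX⟩ := hconn {v} a i b hia hib
          ⟨hva.choose, hva.choose_spec.1, Multiset.singleton_le.mpr hva.choose_spec.2⟩
          ⟨hvb.choose, hvb.choose_spec.1, Multiset.singleton_le.mpr hvb.choose_spec.2⟩
        have hvX' : v ∈ X := Multiset.singleton_le.mp hvX
        refine ⟨(X.erase v).map f, X.erase v, ?_, rfl⟩
        show v ::ₘ X.erase v ∈ L i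
        rwa [Multiset.cons_erase hvX']
    · rintro i j X ⟨S, hS, rfl⟩ ⟨S', hS', hmap⟩
      have hSS' : S' = S := by
        have h1 := hretract i S hS
        have h2 := hretract j S' hS'
        rw [hmap] at h2
        rw [← h1, ← h2]
      rw [hSS'] at hS'
      exact hdisj i j _ hS hS'
    · rintro S'' i j k hij hjk ⟨X, ⟨Si, hSi, rfl⟩, hlei⟩ ⟨Y, ⟨Sk, hSk, rfl⟩, hlek⟩
      obtain ⟨Pi, hPile, hPimap⟩ := exists_le_map_aux f S'' Si hlei
      obtain ⟨Pk, hPkle, hPkmap⟩ := exists_le_map_aux f S'' Sk hlek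
      have hPP : Pi = Pk := by
        have h1 : (Pi.map f).map g = Pi :=  by
          rw [Multiset.map_map]
          rw [show Pi.map (g ∘ f) = Pi.map id from
            Multiset.map_congr rfl
              (fun u hu => hgf u (hmemT i Si hSi u (Multiset.mem_of_le hPile hu)))]
          exact Multiset.map_id Pi
        have h2 : (Pk.map f).map g = Pk :=  by
          rw [Multiset.map_map]
          rw [show Pk.map (g ∘ f) = Pk.map id from
            Multiset.map_congr rfl
              (fun u hu => hgf u (hmemT k Sk hSk u (Multiset.mem_of_le hPkle hu)))]
          exact Multiset.map_id Pk
        rw [← h1, ← h2, hPimap, hPkmap]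
      obtain ⟨Y, hY, hle⟩ := hconn (v ::ₘ Pi) i j k hij hjk
        ⟨v ::ₘ Si, hSi, Multiset.cons_le_cons v hPile⟩
        ⟨v ::ₘ Sk, hSk, Multiset.cons_le_cons v (hPP ▸ hPkle)⟩
      have hvY : v ∈ Y := Multiset.mem_of_le hle (Multiset.mem_cons_self v Pi)
      have hYeq : v ::ₘ Y.erase v = Y := Multiset.cons_erase hvY
      refine ⟨(Y.erase v).map f, ⟨Y.erase v, show v ::ₘ Y.erase v ∈ L j by rwa [hYeq], rfl⟩, ?_⟩
      rw [← hPimap]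
      apply Multiset.map_le_map
      rw [← Multiset.cons_le_cons_iff v, hYeq]
      exact hle
  exact length_le_Hclm hCLM2

/-- Main induction: decomposition with a sharpened counting bound in terms of the
support of the whole complex and of the first layer. -/
lemma clm_main (n d : ℕ) (hd : 1 ≤ d) :
    ∀ (l : ℕ) (a b : ℤ) (L : ℤ → Set (Multiset (Fin n))), IsCLM n d a b L →
    (b - a).toNat = l →
    ∃ (k : ℕ) (ns : Fin k → ℕ), 1 ≤ k ∧ (∀ i, 1 ≤ ns i) ∧
      (∑ i, ns i) + ({u | ∃ X ∈ L a, u ∈ X} : Set (Fin n)).ncard ≤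
        2 * ({u | ∃ i, ∃ X ∈ L i, u ∈ X} : Set (Fin n)).ncard ∧
      (b - a).toNat ≤ (∑ i, Hclm (ns i) (d - 1)) + (k - 1) := by
  intro l
  induction l using Nat.strong_induction_on with
  | _ l ih =>
  intro a b L hM hl
  obtain ⟨hab, hcard, hne, hdisj, hconn⟩ := hM
  -- the set of layers sharing a vertex with layer a
  set B : ℤ → Prop := fun i => i ≤ b ∧ ∃ v : Fin n, (∃ X ∈ L a, v ∈ X) ∧ (∃ X ∈ L i, v ∈ X)
    with hB
  have haB : B a := by
    obtain ⟨X, hX⟩ := (hne a).2 ⟨le_refl a, hab⟩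
    have : ∃ v, v ∈ X := Multiset.card_pos_iff_exists_mem.mp
      (by rw [hcard a X hX]; omega)
    obtain ⟨v, hv⟩ := this
    exact ⟨hab, v, ⟨X, hX, hv⟩, ⟨X, hX, hv⟩⟩
  obtain ⟨b₁, hb₁mem, hub⟩ := Int.exists_greatest_of_bdd (P := B)
    ⟨b, fun z hz => hz.1⟩ ⟨a, haB⟩
  obtain ⟨hb₁b, v, hva, hvb₁⟩ := hb₁mem
  have hab₁ : a ≤ b₁ := hub a haB
  -- suppM of whole complex
  set U : Set (Fin n) := {u | ∃ i, ∃ X ∈ L i, u ∈ X} with hU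
  set W : Set (Fin n) := {u | ∃ X ∈ L a, u ∈ X} with hW
  by_cases hsplit : b ≤ b₁
  · -- single piece
    have hb₁eq : b₁ = b := le_antisymm hb₁b hsplit
    rw [hb₁eq] at hvb₁
    have hpiece := piece hd ⟨hab, hcard, hne, hdisj, hconn⟩ hva hvb₁
    set T : Set (Fin n) := {v} ∪ {u | ∃ i, ∃ X ∈ L i, v ∈ X ∧ u ∈ X.erase v} with hT
    have hTU : T ⊆ U := by
      rintro u (rfl | ⟨i, X, hX, hvX, huX⟩)
      · exact ⟨a, hva.choose, hva.choose_spec.1, hva.choose_spec.2⟩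
      · exact ⟨i, X, hX, Multiset.mem_of_mem_erase huX⟩
    have hWU : W ⊆ U := fun u ⟨X, hX, hu⟩ => ⟨a, X, hX, hu⟩
    have hTle : T.ncard ≤ U.ncard := Set.ncard_le_ncard hTU (Set.toFinite U)
    have hWle : W.ncard ≤ U.ncard := Set.ncard_le_ncard hWU (Set.toFinite U)
    have hT1 : 1 ≤ T.ncard := by
      have : T.Nonempty := ⟨v, Or.inl rfl⟩
      have := Set.ncard_pos (Set.toFinite T) |>.mpr this
      omega
    refine ⟨1, fun _ => T.ncard, le_refl 1, fun _ => hT1, ?_, ?_⟩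
    · rw [Fin.sum_univ_one]; omega
    · rw [Fin.sum_univ_one]; simpa using hpiece
  · -- two pieces: [a, b₁] and [b₁+1, b]
    push_neg at hsplit
    set L₁ : ℤ → Set (Multiset (Fin n)) := fun i => if a ≤ i ∧ i ≤ b₁ then L i else ∅ with hL₁
    set L' : ℤ → Set (Multiset (Fin n)) := fun i => if b₁ + 1 ≤ i ∧ i ≤ b then L i else ∅
      with hL'
    have hM₁ : IsCLM n d a b₁ L₁ :=
      isCLM_restrict ⟨hab, hcard, hne, hdisj, hconn⟩ (le_refl a) hab₁ hb₁b
    have hM' : IsCLM n d (b₁ + 1) b L' :=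
      isCLM_restrict ⟨hab, hcard, hne, hdisj, hconn⟩ (by omega) (by omega) (le_refl b)
    obtain ⟨k', ns', hk', hns'1, hcount', hlen'⟩ :=
      ih ((b - (b₁ + 1)).toNat) (by omega) (b₁ + 1) b L' hM' rfl
    -- piece lemma on [a, b₁]
    have hva₁ : ∃ X ∈ L₁ a, v ∈ X := by
      obtain ⟨X, hX, hv⟩ := hva
      exact ⟨X, by simp only [hL₁, if_pos (And.intro (le_refl a) hab₁)]; exact hX, hv⟩
    have hvb₁' : ∃ X ∈ L₁ b₁, v ∈ X := by
      obtain ⟨X, hX, hv⟩ := hvb₁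
      exact ⟨X, by simp only [hL₁, if_pos (And.intro hab₁ (le_refl b₁))]; exact hX, hv⟩
    have hpiece := piece hd hM₁ hva₁ hvb₁'
    set T₁ : Set (Fin n) := {v} ∪ {u | ∃ i, ∃ X ∈ L₁ i, v ∈ X ∧ u ∈ X.erase v} with hT₁
    set U₁ : Set (Fin n) := {u | ∃ i, ∃ X ∈ L₁ i, u ∈ X} with hU₁
    set U' : Set (Fin n) := {u | ∃ i, ∃ X ∈ L' i, u ∈ X} with hU'2
    set W' : Set (Fin n) := {u | ∃ X ∈ L' (b₁ + 1), u ∈ X} with hW'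
    -- memberships of restricted layers
    have hL₁mem : ∀ i X, X ∈ L₁ i → X ∈ L i ∧ a ≤ i ∧ i ≤ b₁ := by
      intro i X hX
      by_cases hi : a ≤ i ∧ i ≤ b₁
      · exact ⟨by simpa [hL₁, hi] using hX, hi⟩
      · simp [hL₁, hi] at hX
    have hL'mem : ∀ i X, X ∈ L' i → X ∈ L i ∧ b₁ + 1 ≤ i ∧ i ≤ b := by
      intro i X hX
      by_cases hi : b₁ + 1 ≤ i ∧ i ≤ b
      · exact ⟨by simp only [hL', if_pos hi] at hX; exact hX, hi⟩
      · simp only [hL', if_neg hi, Set.mem_empty_iff_false] at hX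
    -- counting facts
    have h1 : T₁.ncard ≤ U₁.ncard := by
      apply Set.ncard_le_ncard ?_ (Set.toFinite U₁)
      rintro u (rfl | ⟨i, X, hX, hvX, huX⟩)
      · exact ⟨a, hva₁.choose, hva₁.choose_spec.1, hva₁.choose_spec.2⟩
      · exact ⟨i, X, hX, Multiset.mem_of_mem_erase huX⟩
    have h3 : (U₁ ∪ U').ncard + (U₁ ∩ U').ncard = U₁.ncard + U'.ncard :=
      Set.ncard_union_add_ncard_inter U₁ U' (Set.toFinite U₁) (Set.toFinite U')
    have h4 : (U₁ ∪ U').ncard ≤ U.ncard := by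
      apply Set.ncard_le_ncard ?_ (Set.toFinite U)
      rintro u (⟨i, X, hX, hu⟩ | ⟨i, X, hX, hu⟩)
      · exact ⟨i, X, (hL₁mem i X hX).1, hu⟩
      · exact ⟨i, X, (hL'mem i X hX).1, hu⟩
    have h5 : (U₁ ∩ U').ncard ≤ W'.ncard := by
      apply Set.ncard_le_ncard ?_ (Set.toFinite W')
      rintro u ⟨⟨i, X, hX, hu⟩, ⟨i', X', hX', hu'⟩⟩
      obtain ⟨hXL, hia, hib₁⟩ := hL₁mem i X hX
      obtain ⟨hX'L, hi'b₁, hi'b⟩ := hL'mem i' X' hX'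
      obtain ⟨Y, hY, huY⟩ := hconn {u} i (b₁ + 1) i' (by omega) (by omega)
        ⟨X, hXL, Multiset.singleton_le.mpr hu⟩ ⟨X', hX'L, Multiset.singleton_le.mpr hu'⟩
      refine ⟨Y, ?_, Multiset.singleton_le.mp huY⟩
      simp only [hL', if_pos (And.intro (le_refl (b₁ + 1)) (by omega : b₁ + 1 ≤ b))]
      exact hY
    have h6 : W.ncard + (U₁ ∩ U').ncard ≤ U₁.ncard := by
      have hdisjWI : Disjoint W (U₁ ∩ U') := by
        rw [Set.disjoint_left]
        rintro u ⟨X, hX, hu⟩ ⟨-, ⟨i', X', hX', hu'⟩⟩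
        obtain ⟨hX'L, hi'b₁, hi'b⟩ := hL'mem i' X' hX'
        have : B i' := ⟨hi'b, u, ⟨X, hX, hu⟩, ⟨X', hX'L, hu'⟩⟩
        have := hub i' this
        omega
      have hsub : W ∪ (U₁ ∩ U') ⊆ U₁ := by
        rintro u (⟨X, hX, hu⟩ | ⟨h₁, -⟩)
        · refine ⟨a, X, ?_, hu⟩
          simp only [hL₁, if_pos (And.intro (le_refl a) hab₁)]
          exact hX
        · exact h₁
      calc W.ncard + (U₁ ∩ U').ncard = (W ∪ (U₁ ∩ U')).ncard :=
            (Set.ncard_union_eq hdisjWI (Set.toFinite W) (Set.toFinite _)).symm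
        _ ≤ U₁.ncard := Set.ncard_le_ncard hsub (Set.toFinite U₁)
    have hT₁1 : 1 ≤ T₁.ncard := by
      have : T₁.Nonempty := ⟨v, Or.inl rfl⟩
      have := Set.ncard_pos (Set.toFinite T₁) |>.mpr this
      omega
    refine ⟨k' + 1, Fin.cons T₁.ncard ns', by omega, ?_, ?_, ?_⟩
    · intro i
      refine Fin.cases ?_ ?_ i
      · simpa using hT₁1
      · intro j; simpa using hns'1 j
    · rw [Fin.sum_cons]
      have h2 : (∑ i, ns' i) + W'.ncard ≤ 2 * U'.ncard := hcount'
      omega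
    · rw [Fin.sum_univ_succ]
      simp only [Fin.cons_zero, Fin.cons_succ]
      have hlen₁ : (b₁ - a).toNat ≤ Hclm T₁.ncard (d - 1) := hpiece
      have hsplit' : (b - a).toNat = (b₁ - a).toNat + 1 + (b - (b₁ + 1)).toNat := by omega
      omega

/-- Decomposition lemma: for every connected layer multicomplex `M` of rank `d` on `n`
elements there are positive integers `n₁,…,n_k` with `n₁ + ⋯ + n_k ≤ 2n − 1` such that
the length of `M` is at most `H_clm(n₁,d−1) + ⋯ + H_clm(n_k,d−1) + k − 1`. -/
theorem clm_decomposition (n d : ℕ) (hd : 1 ≤ d) (a b : ℤ)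
    (L : ℤ → Set (Multiset (Fin n))) (hM : IsCLM n d a b L) :
    ∃ (k : ℕ) (_ : 1 ≤ k) (ns : Fin k → ℕ),
      (∀ i, 1 ≤ ns i) ∧
      (∑ i, ns i) ≤ 2 * n - 1 ∧
      (b - a).toNat ≤ (∑ i, Hclm (ns i) (d - 1)) + (k - 1) := by
  obtain ⟨k, ns, hk, hns1, hcount, hlen⟩ := clm_main n d hd ((b - a).toNat) a b L hM rfl
  refine ⟨k, hk, ns, hns1, ?_, hlen⟩
  have hWpos : 1 ≤ ({u | ∃ X ∈ L a, u ∈ X} : Set (Fin n)).ncard := by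
    obtain ⟨hab, hcard, hne, -, -⟩ := hM
    obtain ⟨X, hX⟩ := (hne a).2 ⟨le_refl a, hab⟩
    obtain ⟨u, hu⟩ := Multiset.card_pos_iff_exists_mem.mp
      (by rw [hcard a X hX]; omega : 0 < Multiset.card X)
    have : ({u | ∃ X ∈ L a, u ∈ X} : Set (Fin n)).Nonempty := ⟨u, X, hX, hu⟩
    have := Set.ncard_pos (Set.toFinite _) |>.mpr this
    omega
  have hUle : ({u | ∃ i, ∃ X ∈ L i, u ∈ X} : Set (Fin n)).ncard ≤ n := by
    have h1 := Set.ncard_le_ncard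
      (Set.subset_univ ({u | ∃ i, ∃ X ∈ L i, u ∈ X} : Set (Fin n))) (Set.toFinite _)
    rw [Set.ncard_univ] at h1
    simpa using h1
  omega
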